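/- Let $(N_t)$ be the linear stochastic evolution $N_{t,y} = \sum_x N_{t-1,x}A_{t,x,y}$ with i.i.d. matrices whose columns are independent, and suppose $\delta := P(\bigcap_{x} \{A_{1,x,0} = 0\}) > 0$ and the matrices have finite range $r_A$. Let $\mathcal{O}_t = \{x : N_{t,x} > 0\}$ be the occupied set. Then almost surely $\lim_{t\to\infty}|\mathcal{O}_t| \in \{0, \infty\}$, i.e., either the process dies out or the number of occupied sites tends to infinity. -/

import Mathlib

open MeasureTheory ProbabilityTheory Filter

/-- The linear stochastic evolution `N_t = N_0 A_1 ⋯ A_t`. -/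
noncomputable def evolve {d : ℕ} {Ω : Type*} (A : ℕ → Ω → (Fin d → ℤ) → (Fin d → ℤ) → ℝ)
    (N0 : (Fin d → ℤ) → ℝ) : ℕ → Ω → (Fin d → ℤ) → ℝ
  | 0, _ => N0
  | (t + 1), ω => fun y => ∑' x, evolve A N0 t ω x * A t ω x y

namespace Stmt17

variable {d : ℕ}

/-- ℓ¹ distance on `ℤ^d`. -/
def dist1 (x y : Fin d → ℤ) : ℕ := ∑ i, (x i - y i).natAbs

lemma dist1_self (x : Fin d → ℤ) : dist1 x x = 0 := by
  simp [dist1]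

lemma dist1_triangle (x y z : Fin d → ℤ) : dist1 x z ≤ dist1 x y + dist1 y z := by
  rw [dist1, dist1, dist1, ← Finset.sum_add_distrib]
  refine Finset.sum_le_sum fun i _ => ?_
  have : x i - z i = (x i - y i) + (y i - z i) := by ring
  rw [this]
  exact Int.natAbs_add_le _ _

/-- the `ℓ∞` box of radius `r` around `x`, as a finset. -/
noncomputable def box (x : Fin d → ℤ) (r : ℕ) : Finset (Fin d → ℤ) :=
  Finset.Icc (fun i => x i - r) (fun i => x i + r)

lemma mem_box_of_dist1 {x y : Fin d → ℤ} {r : ℕ} (h : dist1 x y ≤ r) : y ∈ box x r := by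
  rw [box, Finset.mem_Icc, Pi.le_def, Pi.le_def]
  constructor <;> intro i <;>
  · have h1 : (x i - y i).natAbs ≤ r :=
      le_trans (Finset.single_le_sum (f := fun i => (x i - y i).natAbs)
        (fun _ _ => Nat.zero_le _) (Finset.mem_univ i)) h
    have h2 : |x i - y i| ≤ (r : ℤ) := by
      rw [Int.abs_eq_natAbs]; exact_mod_cast h1
    have := abs_le.mp h2
    omega

lemma card_box (x : Fin d → ℤ) (r : ℕ) : (box x r).card = (2 * r + 1) ^ d := by
  rw [box, Pi.card_Icc]
  have : ∀ i : Fin d, (Finset.Icc (x i - r) (x i + r)).card = 2 * r + 1 := by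
    intro i
    rw [Int.card_Icc]
    omega
  simp [this]

lemma ball_finite (x : Fin d → ℤ) (r : ℕ) : {y | dist1 x y ≤ r}.Finite :=
  Set.Finite.subset (box x r).finite_toSet fun _ h => mem_box_of_dist1 h


variable {Ω : Type*} (A : ℕ → Ω → (Fin d → ℤ) → (Fin d → ℤ) → ℝ)
    (N0 : (Fin d → ℤ) → ℝ) (rA : ℕ)

/-- deterministic support region at time `t` -/
def region (t : ℕ) : Set (Fin d → ℤ) :=
  {y | ∃ x ∈ Function.support N0, dist1 x y ≤ rA * t}

lemma region_finite (hN0fin : (Function.support N0).Finite) (t : ℕ) :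
    (region N0 rA t).Finite := by
  have : region N0 rA t = ⋃ x ∈ Function.support N0, {y | dist1 x y ≤ rA * t} := by
    ext y; simp [region]
  rw [this]
  exact Set.Finite.biUnion hN0fin fun x _ => ball_finite x (rA * t)

lemma evolve_nonneg (hnonneg : ∀ t ω x y, 0 ≤ A t ω x y) (hN0nn : ∀ x, 0 ≤ N0 x) :
    ∀ t ω x, 0 ≤ evolve A N0 t ω x := by
  intro t
  induction t with
  | zero => exact fun ω x => hN0nn x
  | succ t ih =>
    exact fun ω y => tsum_nonneg fun x => mul_nonneg (ih ω x) (hnonneg t ω x y)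

lemma evolve_support
    (hrange : ∀ t ω, ∀ x y : Fin d → ℤ, rA < (∑ i, (x i - y i).natAbs) → A t ω x y = 0) :
    ∀ t ω, Function.support (evolve A N0 t ω) ⊆ region N0 rA t := by
  intro t
  induction t with
  | zero =>
    intro ω x hx
    exact ⟨x, hx, by simp [dist1_self]⟩
  | succ t ih =>
    intro ω y hy
    by_contra hmem
    apply hy
    have hterm : ∀ x, evolve A N0 t ω x * A t ω x y = 0 := by
      intro x
      by_cases hx : evolve A N0 t ω x = 0
      · rw [hx, zero_mul]
      · obtain ⟨x0, hx0, hd⟩ := ih ω hx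
        have hfar : rA < dist1 x y := by
          by_contra hnear
          push_neg at hnear
          exact hmem ⟨x0, hx0, le_trans (dist1_triangle x0 x y)
            (by rw [Nat.mul_succ]; omega)⟩
        rw [hrange t ω x y hfar, mul_zero]
    show (∑' x, evolve A N0 t ω x * A t ω x y) = 0
    simp [hterm]

lemma evolve_succ_sum (hN0fin : (Function.support N0).Finite)
    (hrange : ∀ t ω, ∀ x y : Fin d → ℤ, rA < (∑ i, (x i - y i).natAbs) → A t ω x y = 0)
    (t : ℕ) (ω : Ω) (y : Fin d → ℤ) :
    evolve A N0 (t + 1) ω y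
      = ∑ x ∈ (region_finite N0 rA hN0fin t).toFinset, evolve A N0 t ω x * A t ω x y := by
  show (∑' x, evolve A N0 t ω x * A t ω x y) = _
  refine tsum_eq_sum fun x hx => ?_
  have : evolve A N0 t ω x = 0 := by
    by_contra h
    exact hx ((region_finite N0 rA hN0fin t).mem_toFinset.mpr (evolve_support A N0 rA hrange t ω h))
  rw [this, zero_mul]

/-- the natural filtration of `A` -/
def filt (t : ℕ) : MeasurableSpace Ω :=
  ⨆ i ∈ Set.Iio t, MeasurableSpace.comap (A i) inferInstance

lemma filt_mono : Monotone (filt (d := d) A) := by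
  intro s t hst
  exact biSup_mono fun i (hi : i < s) => lt_of_lt_of_le hi hst

lemma filt_le [m0 : MeasurableSpace Ω] (hAmeas : ∀ t, Measurable (A t)) (t : ℕ) :
    filt A t ≤ m0 := by
  refine iSup₂_le fun i _ => ?_
  exact measurable_iff_comap_le.mp (hAmeas i)

lemma comap_le_filt (t : ℕ) :
    MeasurableSpace.comap (A t) inferInstance ≤ filt (d := d) A (t + 1) :=
  le_biSup (fun i => MeasurableSpace.comap (A i) inferInstance)
    (show t ∈ Set.Iio (t+1) by simp)

lemma measurable_A_entry (t : ℕ) (x y : Fin d → ℤ) :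
    Measurable[MeasurableSpace.comap (A t) inferInstance] (fun ω => A t ω x y) := by
  have h1 : Measurable[MeasurableSpace.comap (A t) inferInstance] (A t) :=
    measurable_iff_comap_le.mpr le_rfl
  exact (measurable_pi_apply y).comp ((measurable_pi_apply x).comp h1)

lemma evolve_meas (hN0fin : (Function.support N0).Finite)
    (hrange : ∀ t ω, ∀ x y : Fin d → ℤ, rA < (∑ i, (x i - y i).natAbs) → A t ω x y = 0) :
    ∀ t x, Measurable[filt (d := d) A t] (fun ω => evolve A N0 t ω x) := by
  intro t
  induction t with
  | zero => exact fun x => @measurable_const _ _ _ (filt A 0) _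
  | succ t ih =>
    intro y
    have : (fun ω => evolve A N0 (t+1) ω y)
        = fun ω => ∑ x ∈ (region_finite N0 rA hN0fin t).toFinset,
            evolve A N0 t ω x * A t ω x y := by
      funext ω; exact evolve_succ_sum A N0 rA hN0fin hrange t ω y
    rw [this]
    refine Finset.measurable_sum _ fun x _ => Measurable.mul ?_ ?_
    · exact (ih x).mono (filt_mono A (Nat.le_succ t)) le_rfl
    · exact (measurable_A_entry A t x y).mono (comap_le_filt A t) le_rfl


end Stmt17
section Part3
variable {d : ℕ} {Ω : Type*} (A : ℕ → Ω → (Fin d → ℤ) → (Fin d → ℤ) → ℝ)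
    (N0 : (Fin d → ℤ) → ℝ) (rA : ℕ)

/-- zero-column event in matrix space -/
def colZero (y : Fin d → ℤ) : Set ((Fin d → ℤ) → (Fin d → ℤ) → ℝ) := {M | ∀ x, M x y = 0}

lemma colZero_meas (y : Fin d → ℤ) : MeasurableSet (colZero y) := by
  have : colZero y = ⋂ x, {M : (Fin d → ℤ) → (Fin d → ℤ) → ℝ | M x y = 0} := by
    ext M; simp [colZero]
  rw [this]
  exact MeasurableSet.iInter fun x =>
    ((measurable_pi_apply y).comp (measurable_pi_apply x)) (measurableSet_singleton 0)

lemma col_prob [MeasurableSpace Ω] (μ : MeasureTheory.Measure Ω)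
    (hAmeas : ∀ t, Measurable (A t))
    (hident : ∀ t, μ.map (A t) = μ.map (A 0))
    (hshift : ∀ z : Fin d → ℤ,
      μ.map (fun ω => fun x y => A 0 ω (x + z) (y + z)) = μ.map (A 0))
    (n : ℕ) (y : Fin d → ℤ) :
    μ {ω | ∀ x, A n ω x y = 0} = μ {ω | ∀ x, A 0 ω x 0 = 0} := by
  set g : Ω → (Fin d → ℤ) → (Fin d → ℤ) → ℝ := fun ω => fun x y' => A 0 ω (x + y) (y' + y)
    with hgdef
  have hgmeas : Measurable g := by
    refine measurable_pi_lambda _ fun x => measurable_pi_lambda _ fun y' => ?_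
    exact (measurable_pi_apply (y' + y)).comp ((measurable_pi_apply (x + y)).comp (hAmeas 0))
  have hg : g ⁻¹' colZero 0 = A 0 ⁻¹' colZero y := by
    ext ω
    constructor
    · intro h x
      have := h (x - y)
      simpa [hgdef, sub_add_cancel, zero_add] using this
    · intro h x
      simpa [hgdef, zero_add] using h (x + y)
  have h1 : {ω | ∀ x, A n ω x y = 0} = A n ⁻¹' colZero y := rfl
  have h2 : {ω | ∀ x, A 0 ω x 0 = 0} = A 0 ⁻¹' colZero 0 := rfl
  rw [h1, h2]
  calc μ (A n ⁻¹' colZero y)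
      = μ.map (A n) (colZero y) := (MeasureTheory.Measure.map_apply (hAmeas n) (colZero_meas y)).symm
    _ = μ.map (A 0) (colZero y) := by rw [hident n]
    _ = μ (A 0 ⁻¹' colZero y) := MeasureTheory.Measure.map_apply (hAmeas 0) (colZero_meas y)
    _ = μ (g ⁻¹' colZero 0) := by rw [hg]
    _ = μ.map g (colZero 0) := (MeasureTheory.Measure.map_apply hgmeas (colZero_meas 0)).symm
    _ = μ.map (A 0) (colZero 0) := by rw [hshift y]
    _ = μ (A 0 ⁻¹' colZero 0) := MeasureTheory.Measure.map_apply (hAmeas 0) (colZero_meas 0)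

/-- the event that all columns of `A n` indexed by `G` vanish -/
def colsZero (n : ℕ) (G : Finset (Fin d → ℤ)) : Set Ω :=
  {ω | ∀ y ∈ G, ∀ x, A n ω x y = 0}

lemma colsZero_prob [MeasurableSpace Ω] (μ : MeasureTheory.Measure Ω)
    (hcols : ∀ t, ProbabilityTheory.iIndepFun
      (fun (y : Fin d → ℤ) ω => fun x => A t ω x y) μ)
    (n : ℕ) (δ0 : ENNReal)
    (hcolprob : ∀ y, μ {ω | ∀ x, A n ω x y = 0} = δ0)
    (G : Finset (Fin d → ℤ)) :
    μ (colsZero A n G) = δ0 ^ G.card := by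
  have hmeas : ∀ y ∈ G, MeasurableSet[MeasurableSpace.comap (fun ω => fun x => A n ω x y)
      inferInstance] {ω | ∀ x, A n ω x y = 0} := by
    intro y _
    refine ⟨{g : (Fin d → ℤ) → ℝ | ∀ x, g x = 0}, ?_, rfl⟩
    have : {g : (Fin d → ℤ) → ℝ | ∀ x, g x = 0} = ⋂ x, {g : (Fin d → ℤ) → ℝ | g x = 0} := by
      ext; simp
    rw [this]
    exact MeasurableSet.iInter fun x => (measurable_pi_apply x) (measurableSet_singleton 0)
  have hbi := (hcols n).iIndep.meas_biInter hmeas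
  have hset : colsZero A n G = ⋂ y ∈ G, {ω | ∀ x, A n ω x y = 0} := by
    ext ω; simp [colsZero]
  rw [hset, hbi, Finset.prod_congr rfl (fun y _ => hcolprob y), Finset.prod_const]

lemma indep_filt_comap [m0 : MeasurableSpace Ω] (μ : MeasureTheory.Measure Ω)
    (hAmeas : ∀ t, Measurable (A t))
    (hindep : ProbabilityTheory.iIndepFun A μ) (n : ℕ) :
    ProbabilityTheory.Indep (Stmt17.filt A n) (MeasurableSpace.comap (A n) inferInstance) μ := by
  have hdisj : Disjoint (Set.Iio n) ({n} : Set ℕ) := by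
    simp
  have h := ProbabilityTheory.indep_iSup_of_disjoint
    (m := fun i => MeasurableSpace.comap (A i) inferInstance)
    (fun i => measurable_iff_comap_le.mp (hAmeas i)) hindep.iIndep hdisj
  simpa [Stmt17.filt] using h

end Part3
section Part4
open Stmt17 MeasureTheory ProbabilityTheory
variable {d : ℕ} {Ω : Type*} (A : ℕ → Ω → (Fin d → ℤ) → (Fin d → ℤ) → ℝ)
    (N0 : (Fin d → ℤ) → ℝ) (rA : ℕ)

/-- occupied set -/
def occ (t : ℕ) (ω : Ω) : Set (Fin d → ℤ) := {x | 0 < evolve A N0 t ω x}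

def occEq (t : ℕ) (F : Finset (Fin d → ℤ)) : Set Ω := {ω | occ A N0 t ω = ↑F}

def smallSet (m t : ℕ) : Set Ω := {ω | (occ A N0 t ω).ncard ≤ m}

def aliveSet (t : ℕ) : Set Ω := {ω | ∃ y, 0 < evolve A N0 (t + 1) ω y}

/-- `rA`-neighborhood of a finset -/
noncomputable def nbhd (F : Finset (Fin d → ℤ)) : Finset (Fin d → ℤ) := F.biUnion fun x => box x rA

lemma card_nbhd (F : Finset (Fin d → ℤ)) : (nbhd rA F).card ≤ F.card * (2 * rA + 1) ^ d := by
  refine le_trans (Finset.card_biUnion_le) ?_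
  rw [Finset.sum_congr rfl fun x _ => card_box x rA, Finset.sum_const, smul_eq_mul]

lemma mem_nbhd {F : Finset (Fin d → ℤ)} {x y : Fin d → ℤ} (hx : x ∈ F) (h : dist1 x y ≤ rA) :
    y ∈ nbhd rA F :=
  Finset.mem_biUnion.mpr ⟨x, hx, mem_box_of_dist1 h⟩

variable (hrange : ∀ t ω, ∀ x y : Fin d → ℤ, rA < (∑ i, (x i - y i).natAbs) → A t ω x y = 0)

include hrange

lemma occ_subset_region (t : ℕ) (ω : Ω) : occ A N0 t ω ⊆ region N0 rA t :=
  fun _ hx => evolve_support A N0 rA hrange t ω (ne_of_gt hx)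

lemma occ_finite (hN0fin : (Function.support N0).Finite) (t : ℕ) (ω : Ω) :
    (occ A N0 t ω).Finite :=
  (region_finite N0 rA hN0fin t).subset (occ_subset_region A N0 rA hrange t ω)

variable (hN0fin : (Function.support N0).Finite)

include hN0fin

lemma occEq_meas (t : ℕ) (F : Finset (Fin d → ℤ)) :
    MeasurableSet[filt A t] (occEq A N0 t F) := by
  have : occEq A N0 t F = ⋂ x, {ω | x ∈ occ A N0 t ω ↔ x ∈ (F : Set (Fin d → ℤ))} := by
    ext ω
    simp only [occEq, Set.mem_setOf_eq, Set.mem_iInter, Set.ext_iff]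
  rw [this]
  refine MeasurableSet.iInter fun x => ?_
  have hm : MeasurableSet[filt A t] {ω | 0 < evolve A N0 t ω x} :=
    measurableSet_lt (@measurable_const _ _ _ (filt A t) 0)
      (evolve_meas A N0 rA hN0fin hrange t x)
  by_cases hx : x ∈ (F : Set (Fin d → ℤ))
  · have he : {ω | x ∈ occ A N0 t ω ↔ x ∈ (F : Set (Fin d → ℤ))}
        = {ω | 0 < evolve A N0 t ω x} := by
      ext ω; simp [occ, hx]
    rw [he]; exact hm
  · have he : {ω | x ∈ occ A N0 t ω ↔ x ∈ (F : Set (Fin d → ℤ))}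
        = {ω | 0 < evolve A N0 t ω x}ᶜ := by
      ext ω; simp [occ, hx]
    rw [he]; exact hm.compl

lemma smallSet_eq (m t : ℕ) :
    smallSet A N0 m t = ⋃ F ∈ ((region_finite N0 rA hN0fin t).toFinset.powerset.filter
      fun F => F.card ≤ m), occEq A N0 t F := by
  ext ω
  simp only [smallSet, Set.mem_setOf_eq, Set.mem_iUnion, Finset.mem_filter,
    Finset.mem_powerset, occEq, exists_prop]
  constructor
  · intro h
    have hfin := occ_finite A N0 rA hrange hN0fin t ω
    refine ⟨hfin.toFinset, ⟨?_, ?_⟩, ?_⟩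
    · intro x hx
      rw [Set.Finite.mem_toFinset] at hx
      exact (region_finite N0 rA hN0fin t).mem_toFinset.mpr
        (occ_subset_region A N0 rA hrange t ω hx)
    · rwa [Set.ncard_eq_toFinset_card (occ A N0 t ω) hfin] at h
    · simp
  · rintro ⟨F, ⟨-, hcard⟩, hocc⟩
    rw [hocc, Set.ncard_coe_finset]
    exact hcard

lemma smallSet_meas (m t : ℕ) : MeasurableSet[filt A t] (smallSet A N0 m t) := by
  rw [smallSet_eq A N0 rA hrange hN0fin m t]
  exact (Finset.measurableSet_biUnion _) fun F _ => occEq_meas A N0 rA hrange hN0fin t F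

lemma aliveSet_meas (t : ℕ) : MeasurableSet[filt A (t + 1)] (aliveSet A N0 t) := by
  have : aliveSet A N0 t = ⋃ y, {ω | 0 < evolve A N0 (t + 1) ω y} := by
    ext ω; simp [aliveSet]
  rw [this]
  exact MeasurableSet.iUnion fun y =>
    measurableSet_lt (@measurable_const _ _ _ (filt A (t+1)) 0)
      (evolve_meas A N0 rA hN0fin hrange (t+1) y)

omit hN0fin in
lemma dead_step (hnonneg : ∀ t ω x y, 0 ≤ A t ω x y) (hN0nn : ∀ x, 0 ≤ N0 x)
    (n : ℕ) (F : Finset (Fin d → ℤ)) (ω : Ω)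
    (hocc : occ A N0 n ω = ↑F) (hz : ∀ y ∈ nbhd rA F, ∀ x, A n ω x y = 0) :
    ω ∉ aliveSet A N0 n := by
  rintro ⟨y', hy'⟩
  have : evolve A N0 (n + 1) ω y' = 0 := by
    show (∑' x, evolve A N0 n ω x * A n ω x y') = 0
    have hterm : ∀ x, evolve A N0 n ω x * A n ω x y' = 0 := by
      intro x
      by_cases hx : evolve A N0 n ω x = 0
      · rw [hx, zero_mul]
      · have hxocc : x ∈ occ A N0 n ω :=
          lt_of_le_of_ne (evolve_nonneg A N0 hnonneg hN0nn n ω x) (Ne.symm hx)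
        have hxF : x ∈ F := by rwa [hocc] at hxocc
        by_cases hnear : dist1 x y' ≤ rA
        · rw [hz y' (mem_nbhd rA hxF hnear) x, mul_zero]
        · rw [hrange n ω x y' (not_le.mp hnear), mul_zero]
    simp [hterm]
  rw [this] at hy'
  exact lt_irrefl 0 hy'

end Part4
section Part5
open Stmt17 MeasureTheory ProbabilityTheory
variable {d : ℕ} {Ω : Type*} [m0 : MeasurableSpace Ω] (μ : Measure Ω) [IsProbabilityMeasure μ]
    (A : ℕ → Ω → (Fin d → ℤ) → (Fin d → ℤ) → ℝ)
    (N0 : (Fin d → ℤ) → ℝ) (rA : ℕ)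

lemma key_bound
    (hAmeas : ∀ t, Measurable (A t))
    (hindep : iIndepFun A μ)
    (hcols : ∀ t, iIndepFun
      (fun (y : Fin d → ℤ) ω => fun x => A t ω x y) μ)
    (hnonneg : ∀ t ω x y, 0 ≤ A t ω x y) (hN0nn : ∀ x, 0 ≤ N0 x)
    (hrange : ∀ t ω, ∀ x y : Fin d → ℤ, rA < (∑ i, (x i - y i).natAbs) → A t ω x y = 0)
    (hN0fin : (Function.support N0).Finite)
    (δ0 : ENNReal) (hδ0le : δ0 ≤ 1)
    (hcolprob : ∀ n y, μ {ω | ∀ x, A n ω x y = 0} = δ0)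
    (n m : ℕ) (B : Set Ω) (hB : MeasurableSet[filt A n] B)
    (hBs : B ⊆ smallSet A N0 m n) :
    μ (B ∩ aliveSet A N0 n) ≤ (1 - δ0 ^ (m * (2 * rA + 1) ^ d)) * μ B := by
  set C := m * (2 * rA + 1) ^ d with hCdef
  set q := 1 - δ0 ^ C with hqdef
  set T := (region_finite N0 rA hN0fin n).toFinset with hTdef
  have hBm0 : MeasurableSet B := filt_le A hAmeas n _ hB
  have hoccEqm0 : ∀ F, MeasurableSet (B ∩ occEq A N0 n F) := fun F =>
    hBm0.inter (filt_le A hAmeas n _ (occEq_meas A N0 rA hrange hN0fin n F))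
  have hcover : B ∩ aliveSet A N0 n
      ⊆ ⋃ F ∈ T.powerset, (B ∩ occEq A N0 n F ∩ aliveSet A N0 n) := by
    intro ω hω
    have hfin := occ_finite A N0 rA hrange hN0fin n ω
    have hmemT : hfin.toFinset ∈ T.powerset := by
      refine Finset.mem_powerset.mpr fun x hx => ?_
      rw [Set.Finite.mem_toFinset] at hx
      exact (region_finite N0 rA hN0fin n).mem_toFinset.mpr
        (occ_subset_region A N0 rA hrange n ω hx)
    exact Set.mem_biUnion hmemT ⟨⟨hω.1, by simp [occEq]⟩, hω.2⟩
  have hperF : ∀ F ∈ T.powerset, μ (B ∩ occEq A N0 n F ∩ aliveSet A N0 n)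
      ≤ q * μ (B ∩ occEq A N0 n F) := by
    intro F _
    rcases Set.eq_empty_or_nonempty (B ∩ occEq A N0 n F) with hE | ⟨ω₀, hω₀⟩
    · have hsub0 : B ∩ occEq A N0 n F ∩ aliveSet A N0 n ⊆ (∅ : Set Ω) := by
        rw [← hE]; exact Set.inter_subset_left
      have hz : μ (B ∩ occEq A N0 n F ∩ aliveSet A N0 n) = 0 :=
        le_antisymm (le_trans (measure_mono hsub0) (by simp)) zero_le
      rw [hz]; exact zero_le
    · have hcard : F.card ≤ m := by
        have h1 := hBs hω₀.1
        rw [show (smallSet A N0 m n) = {ω | (occ A N0 n ω).ncard ≤ m} from rfl] at h1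
        have h2 : (occ A N0 n ω₀).ncard ≤ m := h1
        rw [hω₀.2, Set.ncard_coe_finset] at h2
        exact h2
      have hsub : B ∩ occEq A N0 n F ∩ aliveSet A N0 n
          ⊆ (B ∩ occEq A N0 n F) ∩ (colsZero A n (nbhd rA F))ᶜ := by
        rintro ω ⟨hBF, halive⟩
        exact ⟨hBF, fun hz =>
          dead_step A N0 rA hrange hnonneg hN0nn n F ω hBF.2 hz halive⟩
      have hZcomap : MeasurableSet[MeasurableSpace.comap (A n) inferInstance]
          (colsZero A n (nbhd rA F)) := by
        refine ⟨{M : (Fin d → ℤ) → (Fin d → ℤ) → ℝ | ∀ y ∈ nbhd rA F, ∀ x, M x y = 0},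
          ?_, rfl⟩
        have he : {M : (Fin d → ℤ) → (Fin d → ℤ) → ℝ | ∀ y ∈ nbhd rA F, ∀ x, M x y = 0}
            = ⋂ y ∈ (nbhd rA F : Finset (Fin d → ℤ)), colZero y := by
          ext M; simp [colZero]
        rw [he]
        exact MeasurableSet.biInter (Set.to_countable _) fun y _ => colZero_meas y
      have hZm0 : MeasurableSet (colsZero A n (nbhd rA F)) :=
        measurable_iff_comap_le.mp (hAmeas n) _ hZcomap
      have hprod := (ProbabilityTheory.Indep_iff _ _ μ).mp
        (indep_filt_comap A μ hAmeas hindep n)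
        (B ∩ occEq A N0 n F) (colsZero A n (nbhd rA F))ᶜ
        (hB.inter (occEq_meas A N0 rA hrange hN0fin n F)) hZcomap.compl
      have hZprob : μ (colsZero A n (nbhd rA F)) = δ0 ^ (nbhd rA F).card :=
        colsZero_prob A μ hcols n δ0 (hcolprob n) (nbhd rA F)
      have hcompl : μ ((colsZero A n (nbhd rA F))ᶜ) ≤ q := by
        rw [prob_compl_eq_one_sub hZm0, hZprob, hqdef]
        refine tsub_le_tsub_left ?_ 1
        refine pow_le_pow_of_le_one zero_le hδ0le ?_
        exact le_trans (card_nbhd rA F) (Nat.mul_le_mul_right _ hcard)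
      calc μ (B ∩ occEq A N0 n F ∩ aliveSet A N0 n)
          ≤ μ ((B ∩ occEq A N0 n F) ∩ (colsZero A n (nbhd rA F))ᶜ) := measure_mono hsub
        _ = μ (B ∩ occEq A N0 n F) * μ ((colsZero A n (nbhd rA F))ᶜ) := hprod
        _ ≤ μ (B ∩ occEq A N0 n F) * q := mul_le_mul_right hcompl _
        _ = q * μ (B ∩ occEq A N0 n F) := mul_comm _ _
  have hdisj : (↑T.powerset : Set (Finset (Fin d → ℤ))).PairwiseDisjoint
      (fun F => B ∩ occEq A N0 n F) := by
    intro F _ F' _ hne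
    refine Set.disjoint_left.mpr fun ω h1 h2 => hne ?_
    have : (↑F : Set (Fin d → ℤ)) = ↑F' := by rw [← h1.2, ← h2.2]
    exact_mod_cast this
  calc μ (B ∩ aliveSet A N0 n)
      ≤ μ (⋃ F ∈ T.powerset, (B ∩ occEq A N0 n F ∩ aliveSet A N0 n)) := measure_mono hcover
    _ ≤ ∑ F ∈ T.powerset, μ (B ∩ occEq A N0 n F ∩ aliveSet A N0 n) :=
        measure_biUnion_finset_le _ _
    _ ≤ ∑ F ∈ T.powerset, q * μ (B ∩ occEq A N0 n F) := Finset.sum_le_sum hperF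
    _ = q * ∑ F ∈ T.powerset, μ (B ∩ occEq A N0 n F) := (Finset.mul_sum _ _ _).symm
    _ = q * μ (⋃ F ∈ T.powerset, (B ∩ occEq A N0 n F)) := by
        rw [measure_biUnion_finset hdisj fun F _ => hoccEqm0 F]
    _ ≤ q * μ B := mul_le_mul_right
        (measure_mono (Set.iUnion₂_subset fun F _ => Set.inter_subset_left)) q

end Part5
section Part6
open MeasureTheory
open scoped Classical
variable {Ω : Type*}

/-- `Hset small alive k n`: times `t_1 < ... < t_{k+1} = n` which are exactly the `small`
times `≤ n`, with `alive` at each of the first `k`. -/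
def Hset (small alive : ℕ → Set Ω) : ℕ → ℕ → Set Ω
  | 0, n => small n ∩ ⋂ t ∈ Set.Iio n, (small t)ᶜ
  | (k+1), n => small n ∩
      ⋃ j ∈ Set.Iio n, (Hset small alive k j ∩ alive j ∩ ⋂ t ∈ Set.Ioo j n, (small t)ᶜ)

lemma Hset_zero (small alive : ℕ → Set Ω) (n : ℕ) :
    Hset small alive 0 n = small n ∩ ⋂ t ∈ Set.Iio n, (small t)ᶜ := rfl

lemma Hset_succ (small alive : ℕ → Set Ω) (k n : ℕ) :
    Hset small alive (k+1) n = small n ∩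
      ⋃ j ∈ Set.Iio n, (Hset small alive k j ∩ alive j ∩ ⋂ t ∈ Set.Ioo j n, (small t)ᶜ) := rfl

lemma Hset_subset_small (small alive : ℕ → Set Ω) (k n : ℕ) :
    Hset small alive k n ⊆ small n := by
  cases k
  · rw [Hset_zero]; exact Set.inter_subset_left
  · rw [Hset_succ]; exact Set.inter_subset_left

noncomputable def cnt (small : ℕ → Set Ω) (ω : Ω) (n : ℕ) : ℕ :=
  ((Finset.range n).filter fun t => ω ∈ small t).card

lemma cnt_mono (small : ℕ → Set Ω) (ω : Ω) {a b : ℕ} (h : a ≤ b) :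
    cnt small ω a ≤ cnt small ω b :=
  Finset.card_le_card (Finset.filter_subset_filter _ (Finset.range_subset_range.mpr h))

lemma cnt_succ_mem {small : ℕ → Set Ω} {ω : Ω} {n : ℕ} (h : ω ∈ small n) :
    cnt small ω (n+1) = cnt small ω n + 1 := by
  unfold cnt
  rw [Finset.range_add_one, Finset.filter_insert, if_pos h, Finset.card_insert_of_notMem]
  intro hc
  exact absurd (Finset.mem_range.mp (Finset.mem_of_mem_filter n hc)) (lt_irrefl n)

lemma cnt_succ_not_mem {small : ℕ → Set Ω} {ω : Ω} {n : ℕ} (h : ω ∉ small n) :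
    cnt small ω (n+1) = cnt small ω n := by
  unfold cnt
  rw [Finset.range_add_one, Finset.filter_insert, if_neg h]

lemma cnt_eq_zero {small : ℕ → Set Ω} {ω : Ω} {n : ℕ} :
    cnt small ω n = 0 ↔ ∀ t < n, ω ∉ small t := by
  unfold cnt
  rw [Finset.card_eq_zero, Finset.filter_eq_empty_iff]
  constructor
  · intro h t ht; exact h (Finset.mem_range.mpr ht)
  · intro h t ht; exact h t (Finset.mem_range.mp ht)

lemma cnt_gap {small : ℕ → Set Ω} {ω : Ω} {j : ℕ} :
    ∀ n, j < n → (∀ t, j < t → t < n → ω ∉ small t) →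
    cnt small ω n = cnt small ω (j+1) := by
  intro n
  induction n with
  | zero => omega
  | succ n ih =>
    intro hjn hgap
    rcases Nat.lt_or_ge j n with hlt | hge
    · rw [cnt_succ_not_mem (hgap n hlt (Nat.lt_succ_self n))]
      exact ih hlt fun t h1 h2 => hgap t h1 (Nat.lt_succ_of_lt h2)
    · have : j = n := by omega
      rw [this]

lemma Hset_cnt {small alive : ℕ → Set Ω} {ω : Ω} :
    ∀ k n, ω ∈ Hset small alive k n → ω ∈ small n ∧ cnt small ω n = k := by
  intro k
  induction k with
  | zero =>
    intro n h
    rw [Hset_zero] at h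
    refine ⟨h.1, cnt_eq_zero.mpr fun t ht => ?_⟩
    have := h.2
    rw [Set.mem_iInter₂] at this
    exact this t ht
  | succ k ih =>
    intro n h
    rw [Hset_succ] at h
    obtain ⟨hs, hmem⟩ := h
    rw [Set.mem_iUnion₂] at hmem
    obtain ⟨j, hjn, ⟨⟨hHj, _⟩, hgap⟩⟩ := hmem
    rw [Set.mem_iInter₂] at hgap
    obtain ⟨hsj, hcj⟩ := ih j hHj
    refine ⟨hs, ?_⟩
    rw [cnt_gap n hjn (fun t h1 h2 => hgap t ⟨h1, h2⟩), cnt_succ_mem hsj, hcj]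

lemma Hset_disjoint (small alive : ℕ → Set Ω) (k : ℕ) :
    Pairwise (Function.onFun Disjoint (Hset small alive k)) := by
  have main : ∀ n n', n < n' → ∀ ω, ω ∈ Hset small alive k n →
      ω ∈ Hset small alive k n' → False := by
    intro n n' hlt ω h1 h2
    obtain ⟨hs1, hc1⟩ := Hset_cnt k n h1
    obtain ⟨_, hc2⟩ := Hset_cnt k n' h2
    have : cnt small ω (n+1) ≤ cnt small ω n' := cnt_mono small ω hlt
    rw [cnt_succ_mem hs1, hc1, hc2] at this
    omega
  intro n n' hne
  rcases Nat.lt_or_ge n n' with h | h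
  · exact Set.disjoint_left.mpr fun ω h1 h2 => main n n' h ω h1 h2
  · exact Set.disjoint_left.mpr fun ω h1 h2 =>
      main n' n (by omega) ω h2 h1

lemma Hset_mem {small alive : ℕ → Set Ω} {ω : Ω} (ha : ∀ t, ω ∈ alive t) :
    ∀ k n, ω ∈ small n → cnt small ω n = k → ω ∈ Hset small alive k n := by
  intro k
  induction k with
  | zero =>
    intro n hs hc
    rw [Hset_zero]
    refine ⟨hs, ?_⟩
    rw [Set.mem_iInter₂]
    intro t ht
    exact cnt_eq_zero.mp hc t ht
  | succ k ih =>
    intro n hs hc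
    have hne : ((Finset.range n).filter fun t => ω ∈ small t).Nonempty := by
      rw [← Finset.card_pos]
      show 0 < cnt small ω n
      omega
    set j := (((Finset.range n).filter fun t => ω ∈ small t)).max' hne with hjdef
    have hjmem := Finset.max'_mem _ hne
    rw [← hjdef] at hjmem
    have hjn : j < n := Finset.mem_range.mp (Finset.mem_of_mem_filter j hjmem)
    have hjs : ω ∈ small j := (Finset.mem_filter.mp hjmem).2
    have hgap : ∀ t, j < t → t < n → ω ∉ small t := by
      intro t h1 h2 hts
      have : t ≤ j := Finset.le_max' _ t (Finset.mem_filter.mpr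
        ⟨Finset.mem_range.mpr h2, hts⟩)
      omega
    have hcj : cnt small ω j = k := by
      have h1 : cnt small ω n = cnt small ω (j+1) := cnt_gap n hjn hgap
      rw [cnt_succ_mem hjs] at h1
      omega
    rw [Hset_succ]
    refine ⟨hs, ?_⟩
    rw [Set.mem_iUnion₂]
    exact ⟨j, hjn, ⟨⟨ih j hjs hcj, ha j⟩, by
      rw [Set.mem_iInter₂]; exact fun t ht => hgap t ht.1 ht.2⟩⟩

variable [m0 : MeasurableSpace Ω]

omit m0 in
lemma Hset_meas {small alive : ℕ → Set Ω} (ℱ : ℕ → MeasurableSpace Ω)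
    (hmono : Monotone ℱ)
    (hsm : ∀ n, MeasurableSet[ℱ n] (small n))
    (ham : ∀ n, MeasurableSet[ℱ (n+1)] (alive n)) :
    ∀ k n, MeasurableSet[ℱ n] (Hset small alive k n) := by
  intro k
  induction k with
  | zero =>
    intro n
    rw [Hset_zero]
    refine (hsm n).inter (MeasurableSet.biInter (Set.to_countable _) fun t ht => ?_)
    exact hmono (le_of_lt ht) _ (hsm t).compl
  | succ k ih =>
    intro n
    rw [Hset_succ]
    refine (hsm n).inter (MeasurableSet.biUnion (Set.to_countable _) fun j hj => ?_)
    refine MeasurableSet.inter (MeasurableSet.inter ?_ ?_) ?_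
    · exact hmono (le_of_lt hj) _ (ih j)
    · exact hmono (Nat.succ_le_of_lt hj) _ (ham j)
    · exact MeasurableSet.biInter (Set.to_countable _) fun t ht =>
        hmono (le_of_lt ht.2) _ (hsm t).compl

lemma Hset_recursion (μ : Measure Ω) [IsProbabilityMeasure μ]
    {small alive : ℕ → Set Ω} (ℱ : ℕ → MeasurableSpace Ω)
    (hmono : Monotone ℱ) (hle : ∀ n, ℱ n ≤ m0)
    (hsm : ∀ n, MeasurableSet[ℱ n] (small n))
    (ham : ∀ n, MeasurableSet[ℱ (n+1)] (alive n))
    (q : ENNReal)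
    (hkey : ∀ n (B : Set Ω), MeasurableSet[ℱ n] B → B ⊆ small n →
      μ (B ∩ alive n) ≤ q * μ B) :
    ∀ k, (∑' n, μ (Hset small alive k n ∩ alive n)) ≤ q ^ (k + 1) := by
  have hHm0 : ∀ k n, MeasurableSet (Hset small alive k n) :=
    fun k n => hle n _ (Hset_meas ℱ hmono hsm ham k n)
  have hterm : ∀ k n, μ (Hset small alive k n ∩ alive n) ≤ q * μ (Hset small alive k n) :=
    fun k n => hkey n _ (Hset_meas ℱ hmono hsm ham k n) (Hset_subset_small small alive k n)
  have hsum_le : ∀ k, (∑' n, μ (Hset small alive k n ∩ alive n))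
      ≤ q * ∑' n, μ (Hset small alive k n) := by
    intro k
    calc (∑' n, μ (Hset small alive k n ∩ alive n))
        ≤ ∑' n, q * μ (Hset small alive k n) := ENNReal.tsum_le_tsum (hterm k)
      _ = q * ∑' n, μ (Hset small alive k n) := ENNReal.tsum_mul_left
  have hH0 : (∑' n, μ (Hset small alive 0 n)) ≤ 1 := by
    rw [← measure_iUnion (Hset_disjoint small alive 0) (hHm0 0)]
    exact prob_le_one
  have hHsucc : ∀ k, (∑' n, μ (Hset small alive (k+1) n))
      ≤ ∑' j, μ (Hset small alive k j ∩ alive j) := by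
    intro k
    set W : ℕ → ℕ → Set Ω := fun j n =>
      if j < n then (Hset small alive k j ∩ alive j ∩ ⋂ t ∈ Set.Ioo j n, (small t)ᶜ)
        ∩ small n else ∅ with hWdef
    have hWm0 : ∀ j n, MeasurableSet (W j n) := by
      intro j n
      rw [hWdef]
      dsimp only
      split
      · next hjn =>
        refine MeasurableSet.inter (MeasurableSet.inter (MeasurableSet.inter ?_ ?_) ?_) ?_
        · exact hHm0 k j
        · exact hle (j+1) _ (ham j)
        · exact MeasurableSet.biInter (Set.to_countable _) fun t ht =>
            hle t _ (hsm t).compl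
        · exact hle n _ (hsm n)
      · exact MeasurableSet.empty
    have hWsub : ∀ n, Hset small alive (k+1) n ⊆ ⋃ j, W j n := by
      intro n ω hω
      rw [Hset_succ] at hω
      obtain ⟨hs, hmem⟩ := hω
      rw [Set.mem_iUnion₂] at hmem
      obtain ⟨j, hjn, hj⟩ := hmem
      refine Set.mem_iUnion.mpr ⟨j, ?_⟩
      rw [hWdef]
      dsimp only
      rw [if_pos (Set.mem_Iio.mp hjn)]
      exact ⟨hj, hs⟩
    have hWdisj : ∀ j, Pairwise (Function.onFun Disjoint (W j)) := by
      intro j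
      have main : ∀ n n', n < n' → ∀ ω, ω ∈ W j n → ω ∈ W j n' → False := by
        intro n n' hlt ω h1 h2
        rw [hWdef] at h1 h2
        dsimp only at h1 h2
        by_cases hjn : j < n
        · rw [if_pos hjn] at h1
          rw [if_pos (by omega : j < n')] at h2
          have hsn : ω ∈ small n := h1.2
          have hgap := h2.1.2
          rw [Set.mem_iInter₂] at hgap
          exact hgap n ⟨hjn, hlt⟩ hsn
        · rw [if_neg hjn] at h1; exact h1
      intro n n' hne
      rcases Nat.lt_or_ge n n' with h | h
      · exact Set.disjoint_left.mpr fun ω h1 h2 => main n n' h ω h1 h2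
      · exact Set.disjoint_left.mpr fun ω h1 h2 => main n' n (by omega) ω h2 h1
    have hWGsub : ∀ j, (⋃ n, W j n) ⊆ Hset small alive k j ∩ alive j := by
      intro j ω hω
      rw [Set.mem_iUnion] at hω
      obtain ⟨n, hn⟩ := hω
      rw [hWdef] at hn
      dsimp only at hn
      by_cases hjn : j < n
      · rw [if_pos hjn] at hn
        exact hn.1.1
      · rw [if_neg hjn] at hn; exact absurd hn (Set.notMem_empty ω)
    calc (∑' n, μ (Hset small alive (k+1) n))
        ≤ ∑' n, μ (⋃ j, W j n) := ENNReal.tsum_le_tsum fun n => measure_mono (hWsub n)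
      _ ≤ ∑' n, ∑' j, μ (W j n) := ENNReal.tsum_le_tsum fun n => measure_iUnion_le _
      _ = ∑' j, ∑' n, μ (W j n) := ENNReal.tsum_comm
      _ = ∑' j, μ (⋃ n, W j n) := by
          refine tsum_congr fun j => ?_
          rw [measure_iUnion (hWdisj j) (hWm0 j)]
      _ ≤ ∑' j, μ (Hset small alive k j ∩ alive j) :=
          ENNReal.tsum_le_tsum fun j => measure_mono (hWGsub j)
  intro k
  induction k with
  | zero =>
    calc (∑' n, μ (Hset small alive 0 n ∩ alive n))
        ≤ q * ∑' n, μ (Hset small alive 0 n) := hsum_le 0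
      _ ≤ q * 1 := mul_le_mul_right hH0 q
      _ = q ^ 1 := by rw [mul_one, pow_one]
  | succ k ih =>
    calc (∑' n, μ (Hset small alive (k+1) n ∩ alive n))
        ≤ q * ∑' n, μ (Hset small alive (k+1) n) := hsum_le (k+1)
      _ ≤ q * ∑' j, μ (Hset small alive k j ∩ alive j) := mul_le_mul_right (hHsucc k) q
      _ ≤ q * q ^ (k+1) := mul_le_mul_right ih q
      _ = q ^ (k+2) := by ring

end Part6

open Topology in
/-- If `δ = P(⋂_x {A_{1,x,0} = 0}) > 0` then, a.s., the occupied set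
`𝒪_t = {x : N_{t,x} > 0}` eventually dies out or its cardinality tends to infinity:
`lim_t |𝒪_t| ∈ {0, ∞}` a.s. -/
theorem stmt17 (d : ℕ)
    {Ω : Type*} [MeasurableSpace Ω] (μ : Measure Ω) [IsProbabilityMeasure μ]
    (A : ℕ → Ω → (Fin d → ℤ) → (Fin d → ℤ) → ℝ)
    (hAmeas : ∀ t, Measurable (A t))
    (hindep : iIndepFun A μ)
    (hident : ∀ t, μ.map (A t) = μ.map (A 0))
    (hcols : ∀ t, iIndepFun
      (fun (y : Fin d → ℤ) ω => fun x => A t ω x y) μ)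
    (hnonneg : ∀ t ω x y, 0 ≤ A t ω x y)
    (rA : ℕ)
    (hrange : ∀ t ω, ∀ x y : Fin d → ℤ, rA < (∑ i, (x i - y i).natAbs) → A t ω x y = 0)
    (hshift : ∀ z : Fin d → ℤ,
      μ.map (fun ω => fun x y => A 0 ω (x + z) (y + z)) = μ.map (A 0))
    (N0 : (Fin d → ℤ) → ℝ) (hN0nn : ∀ x, 0 ≤ N0 x)
    (hN0fin : (Function.support N0).Finite)
    (hδ : 0 < μ {ω | ∀ x, A 0 ω x 0 = 0}) :
    ∀ᵐ ω ∂μ,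
      (∀ᶠ t in atTop, {x | 0 < evolve A N0 t ω x} = ∅) ∨
      Tendsto (fun t => ({x | 0 < evolve A N0 t ω x}).ncard) atTop atTop := by
  classical
  open Stmt17 in
  set δ0 := μ {ω | ∀ x, A 0 ω x 0 = 0} with hδ0def
  have hδ0le : δ0 ≤ 1 := prob_le_one
  have hcolprob : ∀ n y, μ {ω | ∀ x, A n ω x y = 0} = δ0 :=
    fun n y => col_prob A μ hAmeas hident hshift n y
  -- extinction is absorbing
  have habs : ∀ ω t s, t ≤ s → {x | 0 < evolve A N0 t ω x} = ∅ →
      {x | 0 < evolve A N0 s ω x} = ∅ := by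
    intro ω t s hts h
    induction s, hts using Nat.le_induction with
    | base => exact h
    | succ s hts ih =>
      have hz : ∀ x, evolve A N0 s ω x = 0 := by
        intro x
        by_contra hx
        have hmem : x ∈ {x | 0 < evolve A N0 s ω x} :=
          lt_of_le_of_ne (evolve_nonneg A N0 hnonneg hN0nn s ω x) (Ne.symm hx)
        rw [ih] at hmem
        exact hmem
      have hz1 : ∀ y, evolve A N0 (s+1) ω y = 0 := by
        intro y
        show (∑' x, evolve A N0 s ω x * A s ω x y) = 0
        simp [hz]
      rw [Set.eq_empty_iff_forall_notMem]
      intro y hy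
      rw [Set.mem_setOf_eq, hz1 y] at hy
      exact lt_irrefl 0 hy
  -- bad events are null
  have hEbad : ∀ m : ℕ, μ {ω | (∀ t, ω ∈ aliveSet A N0 t) ∧
      {t | ω ∈ smallSet A N0 m t}.Infinite} = 0 := by
    intro m
    have hqlt : (1 - δ0 ^ (m * (2 * rA + 1) ^ d)) < 1 :=
      ENNReal.sub_lt_self ENNReal.one_ne_top one_ne_zero
        (ne_of_gt (ENNReal.pow_pos hδ _))
    have hkey : ∀ n (B : Set Ω), MeasurableSet[Stmt17.filt A n] B →
        B ⊆ smallSet A N0 m n →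
        μ (B ∩ aliveSet A N0 n) ≤ (1 - δ0 ^ (m * (2 * rA + 1) ^ d)) * μ B :=
      fun n B hB hBs => key_bound μ A N0 rA hAmeas hindep hcols hnonneg hN0nn hrange
        hN0fin δ0 hδ0le hcolprob n m B hB hBs
    have hrec := Hset_recursion μ (Stmt17.filt A) (filt_mono A) (filt_le A hAmeas)
      (fun n => smallSet_meas A N0 rA hrange hN0fin m n)
      (fun n => aliveSet_meas A N0 rA hrange hN0fin n)
      (1 - δ0 ^ (m * (2 * rA + 1) ^ d)) hkey
    have hsub : ∀ k, {ω | (∀ t, ω ∈ aliveSet A N0 t) ∧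
        {t | ω ∈ smallSet A N0 m t}.Infinite}
        ⊆ ⋃ n, (Hset (smallSet A N0 m) (aliveSet A N0) k n ∩ aliveSet A N0 n) := by
      rintro k ω ⟨haliv, hinf⟩
      have hpinf : {t | ω ∈ smallSet A N0 m t}.Infinite := hinf
      set p : ℕ → Prop := fun t => ω ∈ smallSet A N0 m t with hpdef
      set n := Nat.nth p k with hndef
      have hpn : p n := Nat.nth_mem_of_infinite hpinf k
      have hcnt : cnt (smallSet A N0 m) ω n = k := by
        have h1 := Nat.count_nth_of_infinite hpinf k
        rw [Nat.count_eq_card_filter_range] at h1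
        unfold cnt
        convert h1 using 2
      have hmem := Hset_mem (small := smallSet A N0 m) (alive := aliveSet A N0)
        haliv k n hpn hcnt
      exact Set.mem_iUnion.mpr ⟨n, hmem, haliv n⟩
    have hbound : ∀ k, μ {ω | (∀ t, ω ∈ aliveSet A N0 t) ∧
        {t | ω ∈ smallSet A N0 m t}.Infinite}
        ≤ (1 - δ0 ^ (m * (2 * rA + 1) ^ d)) ^ (k + 1) := fun k =>
      le_trans (measure_mono (hsub k)) (le_trans (measure_iUnion_le _) (hrec k))
    have htend : Tendsto (fun k : ℕ => (1 - δ0 ^ (m * (2 * rA + 1) ^ d)) ^ (k + 1))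
        atTop (𝓝 0) :=
      (ENNReal.tendsto_pow_atTop_nhds_zero_of_lt_one hqlt).comp (tendsto_add_atTop_nat 1)
    exact le_antisymm (ge_of_tendsto' htend hbound) zero_le
  rw [ae_iff]
  have hsubbad : {ω | ¬((∀ᶠ t in atTop, {x | 0 < evolve A N0 t ω x} = ∅) ∨
      Tendsto (fun t => ({x | 0 < evolve A N0 t ω x}).ncard) atTop atTop)}
      ⊆ ⋃ m : ℕ, {ω | (∀ t, ω ∈ aliveSet A N0 t) ∧
          {t | ω ∈ smallSet A N0 m t}.Infinite} := by
    intro ω hω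
    rw [Set.mem_setOf_eq, not_or] at hω
    obtain ⟨hP, hQ⟩ := hω
    have hne : ∀ t, {x | 0 < evolve A N0 t ω x} ≠ ∅ := by
      intro t ht
      apply hP
      rw [eventually_atTop]
      exact ⟨t, fun s hs => habs ω t s hs ht⟩
    have halive : ∀ t, ω ∈ aliveSet A N0 t := by
      intro t
      obtain ⟨y, hy⟩ := Set.nonempty_iff_ne_empty.mpr (hne (t+1))
      exact ⟨y, hy⟩
    have hm : ∃ m : ℕ, {t | ω ∈ smallSet A N0 m t}.Infinite := by
      rw [tendsto_atTop_atTop] at hQ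
      push_neg at hQ
      obtain ⟨b, hb⟩ := hQ
      refine ⟨b, Set.infinite_of_forall_exists_gt fun i => ?_⟩
      obtain ⟨a, hia, hab⟩ := hb (i + 1)
      exact ⟨a, show ({x | 0 < evolve A N0 a ω x}).ncard ≤ b from le_of_lt hab, by omega⟩
    obtain ⟨m, hm⟩ := hm
    exact Set.mem_iUnion.mpr ⟨m, halive, hm⟩
  refine le_antisymm (le_trans (measure_mono hsubbad) ?_) zero_le
  calc μ (⋃ m : ℕ, {ω | (∀ t, ω ∈ aliveSet A N0 t) ∧
      {t | ω ∈ smallSet A N0 m t}.Infinite})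
      ≤ ∑' m : ℕ, μ {ω | (∀ t, ω ∈ aliveSet A N0 t) ∧
        {t | ω ∈ smallSet A N0 m t}.Infinite} := measure_iUnion_le _
    _ = 0 := by simp [hEbad]
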